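/- Let τ be a family of trapezoids with all coordinates distinct, and let e₁ < e₂ < ... < e_k be a chain of matches (where e < e' iff max of the four right coordinates of e is less than min of the four corresponding left coordinates of e' on both axes). Then the set of edges {A_iB_i : e_i = (A_i, B_i)} is an induced matching in the trapezoid graph G(τ). -/

import Mathlib

structure Trapezoid where
  x1 : ℝ
  x2 : ℝ
  y1 : ℝ
  y2 : ℝ
  hx : x1 ≤ x2
  hy : y1 ≤ y2

def SegCross (a b c d : ℝ) : Prop := (a - c) * (b - d) < 0

def TrapIntersect (A B : Trapezoid) : Prop :=
  SegCross A.x1 A.y2 B.x1 B.y2 ∨ SegCross A.x1 A.y2 B.x2 B.y1 ∨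
    SegCross A.x2 A.y1 B.x1 B.y2 ∨ SegCross A.x2 A.y1 B.x2 B.y1

/-- The trapezoid graph `G(τ)`: vertices are the trapezoids of `τ`, edges are intersecting
pairs. -/
def trapGraph (τ : Set Trapezoid) : SimpleGraph τ where
  Adj A B := A ≠ B ∧ TrapIntersect A B
  symm := by
    constructor
    intro A B ⟨hne, h⟩
    refine ⟨hne.symm, ?_⟩
    rcases h with h | h | h | h
    · exact Or.inl (by unfold SegCross at *; nlinarith)
    · exact Or.inr (Or.inr (Or.inl (by unfold SegCross at *; nlinarith)))
    · exact Or.inr (Or.inl (by unfold SegCross at *; nlinarith))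
    · exact Or.inr (Or.inr (Or.inr (by unfold SegCross at *; nlinarith)))
  loopless := by constructor; intro A h; exact h.1 rfl

def DistinctCoords (τ : Set Trapezoid) : Prop :=
  ∀ A ∈ τ, ∀ B ∈ τ, A ≠ B →
    ([A.x1, A.x2, B.x1, B.x2] : List ℝ).Pairwise (· ≠ ·) ∧
    ([A.y1, A.y2, B.y1, B.y2] : List ℝ).Pairwise (· ≠ ·)

def TrapMatch (A B : Trapezoid) : Prop :=
  A.x2 < B.x2 ∧ (B.x1 ≤ A.x2 ∨ B.y1 ≤ A.y2)

def TrapMatchLT (e e' : Trapezoid × Trapezoid) : Prop :=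
  max e.1.x2 e.2.x2 < min e'.1.x1 e'.2.x1 ∧ max e.1.y2 e.2.y2 < min e'.1.y1 e'.2.y1

def IsInducedMatching {V : Type*} (G : SimpleGraph V) (M : Set (Sym2 V)) : Prop :=
  M ⊆ G.edgeSet ∧
    ∀ e ∈ M, ∀ f ∈ M, e ≠ f → ∀ u ∈ e, ∀ v ∈ f, u ≠ v ∧ ¬ G.Adj u v

/-- The edges coming from a chain of matches `e₁ < ⋯ < e_k` form an induced matching in
the trapezoid graph `G(τ)`. -/

lemma sep_not_intersect (u v : Trapezoid) (hx : u.x2 < v.x1) (hy : u.y2 < v.y1) :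
    ¬ TrapIntersect u v := by
  have hux := u.hx; have huy := u.hy; have hvx := v.hx; have hvy := v.hy
  rintro (h | h | h | h) <;> unfold SegCross at h <;> nlinarith

lemma trapMatchLT_trans {a b c : Trapezoid × Trapezoid}
    (h1 : TrapMatchLT a b) (h2 : TrapMatchLT b c) : TrapMatchLT a c := by
  obtain ⟨h1x, h1y⟩ := h1; obtain ⟨h2x, h2y⟩ := h2
  constructor
  · calc max a.1.x2 a.2.x2 < min b.1.x1 b.2.x1 := h1x
      _ ≤ b.1.x1 := min_le_left _ _
      _ ≤ b.1.x2 := b.1.hx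
      _ ≤ max b.1.x2 b.2.x2 := le_max_left _ _
      _ < min c.1.x1 c.2.x1 := h2x
  · calc max a.1.y2 a.2.y2 < min b.1.y1 b.2.y1 := h1y
      _ ≤ b.1.y1 := min_le_left _ _
      _ ≤ b.1.y2 := b.1.hy
      _ ≤ max b.1.y2 b.2.y2 := le_max_left _ _
      _ < min c.1.y1 c.2.y1 := h2y

theorem stmt_12 (τ : Set Trapezoid) (hτ : DistinctCoords τ) (k : ℕ)
    (e : ℕ → τ × τ)
    (hm : ∀ i < k, TrapMatch ((e i).1 : Trapezoid) ((e i).2 : Trapezoid))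
    (hc : ∀ i, i + 1 < k →
      TrapMatchLT (((e i).1 : Trapezoid), ((e i).2 : Trapezoid))
        (((e (i + 1)).1 : Trapezoid), ((e (i + 1)).2 : Trapezoid))) :
    IsInducedMatching (trapGraph τ) {s | ∃ i < k, s = s((e i).1, (e i).2)} := by
  have chain : ∀ i j, i < j → j < k →
      TrapMatchLT (((e i).1 : Trapezoid), ((e i).2 : Trapezoid))
        (((e j).1 : Trapezoid), ((e j).2 : Trapezoid)) := by
    intro i j hij hjk
    induction j with
    | zero => omega
    | succ n ih =>
      rcases Nat.lt_succ_iff_lt_or_eq.mp hij with h | h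
      · exact trapMatchLT_trans (ih h (by omega)) (hc n hjk)
      · subst h; exact hc i hjk
  -- separation helper between endpoints of edges i < j
  have hsepall : ∀ i j, i < j → j < k → ∀ u v : τ,
      (u = (e i).1 ∨ u = (e i).2) → (v = (e j).1 ∨ v = (e j).2) →
      (u : Trapezoid).x2 < (v : Trapezoid).x1 ∧ (u : Trapezoid).y2 < (v : Trapezoid).y1 := by
    intro i j hij hjk u v hu hv
    obtain ⟨hx, hy⟩ := chain i j hij hjk
    have hux : (u : Trapezoid).x2 ≤ max ((e i).1 : Trapezoid).x2 ((e i).2 : Trapezoid).x2 := by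
      rcases hu with rfl | rfl; exact le_max_left _ _; exact le_max_right _ _
    have huy : (u : Trapezoid).y2 ≤ max ((e i).1 : Trapezoid).y2 ((e i).2 : Trapezoid).y2 := by
      rcases hu with rfl | rfl; exact le_max_left _ _; exact le_max_right _ _
    have hvx : min ((e j).1 : Trapezoid).x1 ((e j).2 : Trapezoid).x1 ≤ (v : Trapezoid).x1 := by
      rcases hv with rfl | rfl; exact min_le_left _ _; exact min_le_right _ _
    have hvy : min ((e j).1 : Trapezoid).y1 ((e j).2 : Trapezoid).y1 ≤ (v : Trapezoid).y1 := by
      rcases hv with rfl | rfl; exact min_le_left _ _; exact min_le_right _ _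
    exact ⟨by linarith, by linarith⟩
  constructor
  · rintro s ⟨i, hi, rfl⟩
    rw [SimpleGraph.mem_edgeSet]
    obtain ⟨hx2, hor⟩ := hm i hi
    have hneT : ((e i).1 : Trapezoid) ≠ ((e i).2 : Trapezoid) := by
      intro h; rw [h] at hx2; exact lt_irrefl _ hx2
    have hne : (e i).1 ≠ (e i).2 := fun h => hneT (by rw [h])
    refine ⟨hne, ?_⟩
    set A := ((e i).1 : Trapezoid)
    set B := ((e i).2 : Trapezoid)
    obtain ⟨hpx, hpy⟩ := hτ A (e i).1.2 B (e i).2.2 hneT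
    simp only [List.pairwise_cons, List.mem_cons, List.not_mem_nil, or_false,
      forall_eq_or_imp, forall_eq] at hpx hpy
    have hx21 : A.x2 ≠ B.x1 := hpx.2.1.1
    have hy21 : A.y2 ≠ B.y1 := hpy.2.1.1
    have hy12 : A.y1 ≠ B.y2 := hpy.1.2.2
    unfold TrapIntersect SegCross
    have hAx := A.hx; have hAy := A.hy; have hBx := B.hx; have hBy := B.hy
    rcases hor with h | h
    · have h' : B.x1 < A.x2 := lt_of_le_of_ne h (Ne.symm hx21)
      rcases lt_or_gt_of_ne hy12 with hlt | hgt
      · exact Or.inr (Or.inr (Or.inl (by nlinarith)))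
      · exact Or.inr (Or.inr (Or.inr (by nlinarith)))
    · have h' : B.y1 < A.y2 := lt_of_le_of_ne h (Ne.symm hy21)
      exact Or.inr (Or.inl (by nlinarith))
  · rintro s ⟨i, hi, rfl⟩ t ⟨j, hj, rfl⟩ hst u hu v hv
    rw [Sym2.mem_iff] at hu hv
    have hij : i ≠ j := by rintro rfl; exact hst rfl
    have key : ∀ u v : τ, (u : Trapezoid).x2 < (v : Trapezoid).x1 →
        (u : Trapezoid).y2 < (v : Trapezoid).y1 → u ≠ v ∧ ¬ (trapGraph τ).Adj u v := by
      intro u v hx hy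
      have hne : u ≠ v := by
        intro h; rw [h] at hx
        have := (v : Trapezoid).hx; linarith
      exact ⟨hne, fun hadj => sep_not_intersect _ _ hx hy hadj.2⟩
    rcases Nat.lt_or_ge i j with hlt | hge
    · obtain ⟨hx, hy⟩ := hsepall i j hlt hj u v hu hv
      exact key u v hx hy
    · have hlt : j < i := lt_of_le_of_ne hge (Ne.symm hij)
      obtain ⟨hx, hy⟩ := hsepall j i hlt hi v u hv hu
      obtain ⟨hne, hnadj⟩ := key v u hx hy
      exact ⟨hne.symm, fun h => hnadj h.symm⟩
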